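/- arXiv:1303.6336 — 3 statements merged into one kernel-verified Lean document; each statement's English description precedes it below -/
import Mathlib

section
/- For the ZDT1 problem with d = 30 variables, a point x ∈ [0,1]^30 is Pareto optimal if and only if x_i = 0 for all i = 2, ..., 30. -/
/-- `g(x) = 1 + (9/(30−1))·Σ_{i=2}^{30} x_i` for ZDT1 (0-indexed: sum over `i ≠ 0`). -/
noncomputable def zdt1G (x : Fin 30 → ℝ) : ℝ :=
  1 + (9 / 29) * ∑ i ∈ Finset.univ.erase (0 : Fin 30), x i

/-- `f2(x) = g(x)·(1 − √(x_1/g(x)))` for ZDT1. -/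
noncomputable def zdt1F2 (x : Fin 30 → ℝ) : ℝ :=
  zdt1G x * (1 - Real.sqrt (x 0 / zdt1G x))

lemma zdt1_key (t g : ℝ) (ht0 : 0 ≤ t) (ht1 : t ≤ 1) (hg : 1 ≤ g) :
    1 - Real.sqrt t ≤ g * (1 - Real.sqrt (t / g)) := by
  have hsq : Real.sqrt (t / g) = Real.sqrt t / Real.sqrt g := Real.sqrt_div ht0 g
  have hg0 : (0:ℝ) < g := lt_of_lt_of_le one_pos hg
  have hg2 : Real.sqrt g ^ 2 = g := Real.sq_sqrt hg0.le
  have ht2 : Real.sqrt t ^ 2 = t := Real.sq_sqrt ht0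
  have hr1 : 1 ≤ Real.sqrt g := by
    rw [show (1:ℝ) = Real.sqrt 1 by simp]; exact Real.sqrt_le_sqrt hg
  have hs1 : Real.sqrt t ≤ 1 := Real.sqrt_le_one.mpr ht1
  have hrpos : (0:ℝ) < Real.sqrt g := lt_of_lt_of_le one_pos hr1
  have key : g * (Real.sqrt t / Real.sqrt g) = Real.sqrt g * Real.sqrt t := by
    field_simp; nlinarith [hg2]
  rw [hsq, mul_sub, key]
  nlinarith [mul_nonneg (sub_nonneg.mpr hr1) (Real.sqrt_nonneg t), Real.sqrt_nonneg t]

lemma zdt1_key_strict (t g : ℝ) (ht0 : 0 ≤ t) (ht1 : t ≤ 1) (hg : 1 < g) :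
    1 - Real.sqrt t < g * (1 - Real.sqrt (t / g)) := by
  have hsq : Real.sqrt (t / g) = Real.sqrt t / Real.sqrt g := Real.sqrt_div ht0 g
  have hg0 : (0:ℝ) < g := lt_trans one_pos hg
  have hg2 : Real.sqrt g ^ 2 = g := Real.sq_sqrt hg0.le
  have ht2 : Real.sqrt t ^ 2 = t := Real.sq_sqrt ht0
  have hr1 : 1 < Real.sqrt g := by
    have := Real.sqrt_lt_sqrt zero_le_one hg
    simpa using this
  have hs1 : Real.sqrt t ≤ 1 := Real.sqrt_le_one.mpr ht1
  have hrpos : (0:ℝ) < Real.sqrt g := lt_trans one_pos hr1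
  have key : g * (Real.sqrt t / Real.sqrt g) = Real.sqrt g * Real.sqrt t := by
    field_simp; nlinarith [hg2]
  rw [hsq, mul_sub, key]
  nlinarith [mul_nonneg (sub_nonneg.mpr hr1.le) (Real.sqrt_nonneg t), Real.sqrt_nonneg t]

lemma zdt1G_ge_one (x : Fin 30 → ℝ) (hx : ∀ i, 0 ≤ x i) : 1 ≤ zdt1G x := by
  have hS : 0 ≤ ∑ i ∈ Finset.univ.erase (0 : Fin 30), x i :=
    Finset.sum_nonneg fun i _ => hx i
  unfold zdt1G; nlinarith

lemma zdt1G_gt_one (x : Fin 30 → ℝ) (hx : ∀ i, 0 ≤ x i) (j : Fin 30) (hj : j ≠ 0)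
    (hxj : 0 < x j) : 1 < zdt1G x := by
  have hS : x j ≤ ∑ i ∈ Finset.univ.erase (0 : Fin 30), x i :=
    Finset.single_le_sum (fun i _ => hx i) (by simp [hj])
  unfold zdt1G; nlinarith

lemma zdt1F2_tail_zero (x : Fin 30 → ℝ) (h : ∀ i : Fin 30, i ≠ 0 → x i = 0) :
    zdt1F2 x = 1 - Real.sqrt (x 0) := by
  have hG : zdt1G x = 1 := by
    unfold zdt1G
    have : ∑ i ∈ Finset.univ.erase (0 : Fin 30), x i = 0 :=
      Finset.sum_eq_zero fun i hi => h i (Finset.ne_of_mem_erase hi)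
    rw [this]; ring
  unfold zdt1F2; rw [hG]; simp

/-- For ZDT1 with `d = 30`, a point `x ∈ [0,1]^30` is Pareto optimal iff
`x_i = 0` for all `i = 2, ..., 30`. -/
theorem zdt1_pareto_optimal_iff (x : Fin 30 → ℝ)
    (hx : ∀ i, x i ∈ Set.Icc (0 : ℝ) 1) :
    (¬ ∃ y : Fin 30 → ℝ, (∀ i, y i ∈ Set.Icc (0 : ℝ) 1) ∧
        y 0 ≤ x 0 ∧ zdt1F2 y ≤ zdt1F2 x ∧ (y 0 < x 0 ∨ zdt1F2 y < zdt1F2 x)) ↔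
      ∀ i : Fin 30, i ≠ 0 → x i = 0 := by
  constructor
  · intro hnd
    by_contra hc
    push_neg at hc
    obtain ⟨j, hj, hxj⟩ := hc
    have hxjpos : 0 < x j := lt_of_le_of_ne (hx j).1 (Ne.symm hxj)
    set y : Fin 30 → ℝ := fun i => if i = 0 then x 0 else 0 with hy
    have hytail : ∀ i : Fin 30, i ≠ 0 → y i = 0 := fun i hi => by simp [hy, hi]
    have hy0 : y 0 = x 0 := by simp [hy]
    apply hnd
    refine ⟨y, ?_, le_of_eq hy0, ?_, Or.inr ?_⟩
    · intro i
      by_cases hi : i = 0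
      · simp [hy, hi]; exact hx 0
      · simp [hy, hi]
    · have := zdt1_key_strict (x 0) (zdt1G x) (hx 0).1 (hx 0).2
        (zdt1G_gt_one x (fun i => (hx i).1) j hj hxjpos)
      rw [zdt1F2_tail_zero y hytail, hy0]
      unfold zdt1F2
      linarith
    · have := zdt1_key_strict (x 0) (zdt1G x) (hx 0).1 (hx 0).2
        (zdt1G_gt_one x (fun i => (hx i).1) j hj hxjpos)
      rw [zdt1F2_tail_zero y hytail, hy0]
      unfold zdt1F2
      linarith
  · rintro h ⟨y, hy, h0, h2, hstrict⟩
    have hfx : zdt1F2 x = 1 - Real.sqrt (x 0) := zdt1F2_tail_zero x h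
    have hfy : 1 - Real.sqrt (y 0) ≤ zdt1F2 y := by
      have := zdt1_key (y 0) (zdt1G y) (hy 0).1 (hy 0).2
        (zdt1G_ge_one y (fun i => (hy i).1))
      unfold zdt1F2; linarith
    have hmono : Real.sqrt (y 0) ≤ Real.sqrt (x 0) := Real.sqrt_le_sqrt h0
    rcases hstrict with hlt | hlt
    · have : Real.sqrt (y 0) < Real.sqrt (x 0) := Real.sqrt_lt_sqrt (hy 0).1 hlt
      linarith
    · linarith
end

section
/- For the LZ problem in dimension d ≥ 3, every point x with x_1 ∈ [0, 1] and x_j = sin(6π x_1 + jπ/d) for all j = 2, ..., d is Pareto optimal, and its objective vector is (f1(x), f2(x)) = (x_1, 1 − √x_1); hence the Pareto front of the LZ problem is {(t, 1 − √t) : t ∈ [0, 1]}. -/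
/-- The target value `sin(6π x₁ + jπ/d)` of the `j`-th coordinate in the LZ problem. -/
noncomputable def lzTarget (d : ℕ) (x1 : ℝ) (j : ℕ) : ℝ :=
  Real.sin (6 * Real.pi * x1 + (j : ℝ) * Real.pi / (d : ℝ))

/-- `J1`: odd indices among `2, ..., d`. -/
def lzJ1 (d : ℕ) : Finset ℕ := (Finset.Icc 2 d).filter (fun j => Odd j)

/-- `J2`: even indices among `2, ..., d`. -/
def lzJ2 (d : ℕ) : Finset ℕ := (Finset.Icc 2 d).filter (fun j => Even j)

/-- First objective of the LZ problem. -/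
noncomputable def lzF1 (d : ℕ) (x : ℕ → ℝ) : ℝ :=
  x 1 + (2 / ((lzJ1 d).card : ℝ)) * ∑ j ∈ lzJ1 d, (x j - lzTarget d (x 1) j) ^ 2

/-- Second objective of the LZ problem. -/
noncomputable def lzF2 (d : ℕ) (x : ℕ → ℝ) : ℝ :=
  1 - Real.sqrt (x 1) + (2 / ((lzJ2 d).card : ℝ)) * ∑ j ∈ lzJ2 d, (x j - lzTarget d (x 1) j) ^ 2

/-- Feasibility for the LZ problem: `x₁ ∈ [0,1]` and `x_j ∈ [−1,1]` for `j = 2, ..., d`. -/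
def lzFeasible (d : ℕ) (x : ℕ → ℝ) : Prop :=
  x 1 ∈ Set.Icc (0 : ℝ) 1 ∧ ∀ j, 2 ≤ j → j ≤ d → x j ∈ Set.Icc (-1 : ℝ) 1

/-- Pareto optimality for the LZ problem. -/
def lzParetoOptimal (d : ℕ) (x : ℕ → ℝ) : Prop :=
  lzFeasible d x ∧
    ¬ ∃ y : ℕ → ℝ, lzFeasible d y ∧ lzF1 d y ≤ lzF1 d x ∧ lzF2 d y ≤ lzF2 d x ∧
      (lzF1 d y < lzF1 d x ∨ lzF2 d y < lzF2 d x)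

lemma lzF1_ge (d : ℕ) (x : ℕ → ℝ) : x 1 ≤ lzF1 d x :=
  le_add_of_nonneg_right (mul_nonneg (by positivity)
    (Finset.sum_nonneg fun j _ => sq_nonneg _))

lemma lzF2_ge (d : ℕ) (x : ℕ → ℝ) : 1 - Real.sqrt (x 1) ≤ lzF2 d x :=
  le_add_of_nonneg_right (mul_nonneg (by positivity)
    (Finset.sum_nonneg fun j _ => sq_nonneg _))

lemma lzF1_manifold (d : ℕ) (x : ℕ → ℝ)
    (hm : ∀ j, 2 ≤ j → j ≤ d → x j = lzTarget d (x 1) j) : lzF1 d x = x 1 := by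
  have : ∑ j ∈ lzJ1 d, (x j - lzTarget d (x 1) j) ^ 2 = 0 := by
    refine Finset.sum_eq_zero fun j hj => ?_
    simp only [lzJ1, Finset.mem_filter, Finset.mem_Icc] at hj
    rw [hm j hj.1.1 hj.1.2]; ring
  simp [lzF1, this]

lemma lzF2_manifold (d : ℕ) (x : ℕ → ℝ)
    (hm : ∀ j, 2 ≤ j → j ≤ d → x j = lzTarget d (x 1) j) :
    lzF2 d x = 1 - Real.sqrt (x 1) := by
  have : ∑ j ∈ lzJ2 d, (x j - lzTarget d (x 1) j) ^ 2 = 0 := by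
    refine Finset.sum_eq_zero fun j hj => ?_
    simp only [lzJ2, Finset.mem_filter, Finset.mem_Icc] at hj
    rw [hm j hj.1.1 hj.1.2]; ring
  simp [lzF2, this]

/-- For the LZ problem with `d ≥ 3`, every point with `x₁ ∈ [0,1]` and
`x_j = sin(6π x₁ + jπ/d)` for `j = 2, ..., d` is Pareto optimal with objective
vector `(x₁, 1 − √x₁)`; hence the Pareto front is `{(t, 1 − √t) : t ∈ [0, 1]}`. -/
theorem lz_manifold_pareto_and_front (d : ℕ) (hd : 3 ≤ d) :
    (∀ x : ℕ → ℝ, x 1 ∈ Set.Icc (0 : ℝ) 1 →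
      (∀ j, 2 ≤ j → j ≤ d → x j = lzTarget d (x 1) j) →
      lzParetoOptimal d x ∧ lzF1 d x = x 1 ∧ lzF2 d x = 1 - Real.sqrt (x 1)) ∧
    {p : ℝ × ℝ | ∃ x : ℕ → ℝ, lzParetoOptimal d x ∧ p = (lzF1 d x, lzF2 d x)} =
      {p : ℝ × ℝ | ∃ t ∈ Set.Icc (0 : ℝ) 1, p = (t, 1 - Real.sqrt t)} := by
  have key : ∀ x : ℕ → ℝ, x 1 ∈ Set.Icc (0 : ℝ) 1 →
      (∀ j, 2 ≤ j → j ≤ d → x j = lzTarget d (x 1) j) →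
      lzParetoOptimal d x ∧ lzF1 d x = x 1 ∧ lzF2 d x = 1 - Real.sqrt (x 1) := by
    intro x hx1 hm
    have h1 := lzF1_manifold d x hm
    have h2 := lzF2_manifold d x hm
    refine ⟨⟨⟨hx1, fun j hj hjd => ?_⟩, ?_⟩, h1, h2⟩
    · rw [hm j hj hjd]
      exact ⟨Real.neg_one_le_sin _, Real.sin_le_one _⟩
    · rintro ⟨y, hy, hf1, hf2, hs⟩
      rw [h1] at hf1
      rw [h2] at hf2
      have hy1 : y 1 ≤ x 1 := le_trans (lzF1_ge d y) hf1
      have hs2 : Real.sqrt (x 1) ≤ Real.sqrt (y 1) := by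
        have := le_trans (lzF2_ge d y) hf2
        linarith
      have hx1y : x 1 ≤ y 1 := by
        have := Real.sqrt_le_sqrt_iff hy.1.1 |>.mp hs2
        exact this
      have heq : y 1 = x 1 := le_antisymm hy1 hx1y
      rcases hs with hs | hs
      · have := lzF1_ge d y
        rw [h1] at hs; linarith
      · have := lzF2_ge d y
        rw [heq] at this; linarith
  refine ⟨key, ?_⟩
  ext p
  simp only [Set.mem_setOf_eq]
  constructor
  · rintro ⟨x, hpo, rfl⟩
    have hx1 := hpo.1.1
    set y : ℕ → ℝ := fun j => if j = 1 then x 1 else lzTarget d (x 1) j with hy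
    have hy1 : y 1 = x 1 := by simp [hy]
    have hym : ∀ j, 2 ≤ j → j ≤ d → y j = lzTarget d (y 1) j := by
      intro j hj hjd
      simp [hy]
      omega
    have hk := key y (by rw [hy1]; exact hx1) hym
    have hf1y : lzF1 d y = x 1 := by rw [hk.2.1, hy1]
    have hf2y : lzF2 d y = 1 - Real.sqrt (x 1) := by rw [hk.2.2, hy1]
    have hyfeas : lzFeasible d y := hk.1.1
    have hle1 : lzF1 d y ≤ lzF1 d x := by rw [hf1y]; exact lzF1_ge d x
    have hle2 : lzF2 d y ≤ lzF2 d x := by rw [hf2y]; exact lzF2_ge d x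
    have he1 : lzF1 d x = x 1 := by
      by_contra h
      exact hpo.2 ⟨y, hyfeas, hle1, hle2, Or.inl (lt_of_le_of_ne hle1 (by rw [hf1y]; exact fun hh => h hh.symm))⟩
    have he2 : lzF2 d x = 1 - Real.sqrt (x 1) := by
      by_contra h
      exact hpo.2 ⟨y, hyfeas, hle1, hle2, Or.inr (lt_of_le_of_ne hle2 (by rw [hf2y]; exact fun hh => h hh.symm))⟩
    exact ⟨x 1, hx1, by rw [he1, he2]⟩
  · rintro ⟨t, ht, rfl⟩
    set x0 : ℕ → ℝ := fun j => if j = 1 then t else lzTarget d t j with hx0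
    refine ⟨x0, ?_⟩
    have hx1 : x0 1 = t := by simp [hx0]
    have hk := key x0 (by rw [hx1]; exact ht)
      (by intro j hj hjd; rw [hx1]; simp [hx0]; omega)
    rw [hx1] at hk
    exact ⟨hk.1, by rw [hk.2.1, hk.2.2]⟩
end

section
/- For the LZ problem in dimension d ≥ 3, if a feasible point x satisfies x_j ≠ sin(6π x_1 + jπ/d) for at least one index j ∈ {2, ..., d}, then x is dominated by the feasible point y defined by y_1 = x_1 and y_j = sin(6π x_1 + jπ/d) for j = 2, ..., d: f1(y) ≤ f1(x), f2(y) ≤ f2(x), and at least one inequality is strict. Consequently the Pareto optimal set of the LZ problem is exactly {x : x_1 ∈ [0,1], x_j = sin(6π x_1 + jπ/d) for j = 2, ..., d}. -/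
/-- The point `y` obtained from `x` by keeping `y₁ = x₁` and setting
`y_j = sin(6π x₁ + jπ/d)` for `j = 2, ..., d`. -/
noncomputable def lzProj (d : ℕ) (x : ℕ → ℝ) : ℕ → ℝ :=
  fun j => if 2 ≤ j ∧ j ≤ d then lzTarget d (x 1) j else x j

lemma lzProj_one (d : ℕ) (x : ℕ → ℝ) : lzProj d x 1 = x 1 := by simp [lzProj]

lemma lzProj_eq (d : ℕ) (x : ℕ → ℝ) {j : ℕ} (h2 : 2 ≤ j) (hj : j ≤ d) :
    lzProj d x j = lzTarget d (x 1) j := by simp [lzProj, h2, hj]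

lemma memJ1 {d j : ℕ} (h : j ∈ lzJ1 d) : 2 ≤ j ∧ j ≤ d := by
  simp [lzJ1, Finset.mem_filter, Finset.mem_Icc] at h; exact ⟨h.1.1, h.1.2⟩

lemma memJ2 {d j : ℕ} (h : j ∈ lzJ2 d) : 2 ≤ j ∧ j ≤ d := by
  simp [lzJ2, Finset.mem_filter, Finset.mem_Icc] at h; exact ⟨h.1.1, h.1.2⟩

lemma lzF1_proj (d : ℕ) (x : ℕ → ℝ) : lzF1 d (lzProj d x) = x 1 := by
  unfold lzF1
  rw [lzProj_one]
  have : ∑ j ∈ lzJ1 d, (lzProj d x j - lzTarget d (x 1) j) ^ 2 = 0 := by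
    apply Finset.sum_eq_zero
    intro j hj
    obtain ⟨h2, hjd⟩ := memJ1 hj
    rw [lzProj_eq d x h2 hjd]; ring
  rw [this]; ring

lemma lzF2_proj (d : ℕ) (x : ℕ → ℝ) : lzF2 d (lzProj d x) = 1 - Real.sqrt (x 1) := by
  unfold lzF2
  rw [lzProj_one]
  have : ∑ j ∈ lzJ2 d, (lzProj d x j - lzTarget d (x 1) j) ^ 2 = 0 := by
    apply Finset.sum_eq_zero
    intro j hj
    obtain ⟨h2, hjd⟩ := memJ2 hj
    rw [lzProj_eq d x h2 hjd]; ring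
  rw [this]; ring

lemma lzF1_onman (d : ℕ) (x : ℕ → ℝ) (h : ∀ j, 2 ≤ j → j ≤ d → x j = lzTarget d (x 1) j) :
    lzF1 d x = x 1 := by
  unfold lzF1
  have : ∑ j ∈ lzJ1 d, (x j - lzTarget d (x 1) j) ^ 2 = 0 := by
    apply Finset.sum_eq_zero
    intro j hj
    obtain ⟨h2, hjd⟩ := memJ1 hj
    rw [h j h2 hjd]; ring
  rw [this]; ring

lemma lzF2_onman (d : ℕ) (x : ℕ → ℝ) (h : ∀ j, 2 ≤ j → j ≤ d → x j = lzTarget d (x 1) j) :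
    lzF2 d x = 1 - Real.sqrt (x 1) := by
  unfold lzF2
  have : ∑ j ∈ lzJ2 d, (x j - lzTarget d (x 1) j) ^ 2 = 0 := by
    apply Finset.sum_eq_zero
    intro j hj
    obtain ⟨h2, hjd⟩ := memJ2 hj
    rw [h j h2 hjd]; ring
  rw [this]; ring

lemma lzJ1_card_pos (d : ℕ) (hd : 3 ≤ d) : 0 < ((lzJ1 d).card : ℝ) := by
  have : 3 ∈ lzJ1 d := by
    simp [lzJ1, Finset.mem_filter, Finset.mem_Icc, hd]
    decide
  exact_mod_cast Finset.card_pos.mpr ⟨3, this⟩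

lemma lzJ2_card_pos (d : ℕ) (hd : 3 ≤ d) : 0 < ((lzJ2 d).card : ℝ) := by
  have : 2 ∈ lzJ2 d := by
    simp [lzJ2, Finset.mem_filter, Finset.mem_Icc]
    omega
  exact_mod_cast Finset.card_pos.mpr ⟨2, this⟩

lemma lz_dominates (d : ℕ) (hd : 3 ≤ d) (x : ℕ → ℝ) (hx : lzFeasible d x)
    (hoff : ∃ j, 2 ≤ j ∧ j ≤ d ∧ x j ≠ lzTarget d (x 1) j) :
    lzFeasible d (lzProj d x) ∧
      lzF1 d (lzProj d x) ≤ lzF1 d x ∧ lzF2 d (lzProj d x) ≤ lzF2 d x ∧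
      (lzF1 d (lzProj d x) < lzF1 d x ∨ lzF2 d (lzProj d x) < lzF2 d x) := by
  obtain ⟨j, h2, hjd, hne⟩ := hoff
  have hfeas : lzFeasible d (lzProj d x) := by
    refine ⟨by rw [lzProj_one]; exact hx.1, ?_⟩
    intro k hk2 hkd
    rw [lzProj_eq d x hk2 hkd]
    exact ⟨Real.neg_one_le_sin _, Real.sin_le_one _⟩
  have h1 : lzF1 d (lzProj d x) ≤ lzF1 d x := by
    rw [lzF1_proj]; exact lzF1_ge d x
  have h2' : lzF2 d (lzProj d x) ≤ lzF2 d x := by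
    rw [lzF2_proj]; exact lzF2_ge d x
  refine ⟨hfeas, h1, h2', ?_⟩
  have hne' : x j - lzTarget d (x 1) j ≠ 0 := sub_ne_zero.mpr hne
  have hpos : 0 < (x j - lzTarget d (x 1) j) ^ 2 := by positivity
  rcases Nat.even_or_odd j with he | ho
  · right
    rw [lzF2_proj]
    unfold lzF2
    have hmem : j ∈ lzJ2 d := by
      simp [lzJ2, Finset.mem_filter, Finset.mem_Icc]
      exact ⟨⟨h2, hjd⟩, he⟩
    have hsum : 0 < ∑ k ∈ lzJ2 d, (x k - lzTarget d (x 1) k) ^ 2 :=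
      Finset.sum_pos' (fun k _ => sq_nonneg _) ⟨j, hmem, hpos⟩
    have hc : 0 < 2 / ((lzJ2 d).card : ℝ) := by
      have := lzJ2_card_pos d hd; positivity
    nlinarith
  · left
    rw [lzF1_proj]
    unfold lzF1
    have hmem : j ∈ lzJ1 d := by
      simp [lzJ1, Finset.mem_filter, Finset.mem_Icc]
      exact ⟨⟨h2, hjd⟩, ho⟩
    have hsum : 0 < ∑ k ∈ lzJ1 d, (x k - lzTarget d (x 1) k) ^ 2 :=
      Finset.sum_pos' (fun k _ => sq_nonneg _) ⟨j, hmem, hpos⟩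
    have hc : 0 < 2 / ((lzJ1 d).card : ℝ) := by
      have := lzJ1_card_pos d hd; positivity
    nlinarith


/-- For the LZ problem with `d ≥ 3`, any feasible point off the manifold
`x_j = sin(6π x₁ + jπ/d)` (for some `j ∈ {2, ..., d}`) is dominated by its
projection onto the manifold; consequently the Pareto optimal set is exactly
the set of feasible points lying on the manifold. -/
theorem lz_off_manifold_dominated_and_pareto_set (d : ℕ) (hd : 3 ≤ d) :
    (∀ x : ℕ → ℝ, lzFeasible d x →
      (∃ j, 2 ≤ j ∧ j ≤ d ∧ x j ≠ lzTarget d (x 1) j) →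
      lzFeasible d (lzProj d x) ∧
        lzF1 d (lzProj d x) ≤ lzF1 d x ∧ lzF2 d (lzProj d x) ≤ lzF2 d x ∧
        (lzF1 d (lzProj d x) < lzF1 d x ∨ lzF2 d (lzProj d x) < lzF2 d x)) ∧
    {x : ℕ → ℝ | lzParetoOptimal d x} =
      {x : ℕ → ℝ | lzFeasible d x ∧ ∀ j, 2 ≤ j → j ≤ d → x j = lzTarget d (x 1) j} := by
  refine ⟨fun x hx hoff => lz_dominates d hd x hx hoff, ?_⟩
  ext x
  simp only [Set.mem_setOf_eq]
  constructor
  · rintro ⟨hxf, hnd⟩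
    refine ⟨hxf, ?_⟩
    by_contra h
    push_neg at h
    obtain ⟨j, h2, hjd, hne⟩ := h
    obtain ⟨hf, h1, h2', hs⟩ := lz_dominates d hd x hxf ⟨j, h2, hjd, hne⟩
    exact hnd ⟨lzProj d x, hf, h1, h2', hs⟩
  · rintro ⟨hxf, hman⟩
    refine ⟨hxf, ?_⟩
    rintro ⟨y, hyf, h1, h2, hs⟩
    rw [lzF1_onman d x hman] at h1 hs
    rw [lzF2_onman d x hman] at h2 hs
    have hy1 : y 1 ≤ x 1 := le_trans (lzF1_ge d y) h1
    have hx1 : x 1 ≤ y 1 := by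
      have h2' : 1 - Real.sqrt (y 1) ≤ 1 - Real.sqrt (x 1) := le_trans (lzF2_ge d y) h2
      have hsq : Real.sqrt (x 1) ≤ Real.sqrt (y 1) := by linarith
      have := hyf.1.1
      nlinarith [Real.sq_sqrt this, Real.sq_sqrt hxf.1.1, Real.sqrt_nonneg (x 1),
        Real.sqrt_nonneg (y 1)]
    have heq : y 1 = x 1 := le_antisymm hy1 hx1
    have g1 : x 1 ≤ lzF1 d y := heq ▸ lzF1_ge d y
    have g2 : 1 - Real.sqrt (x 1) ≤ lzF2 d y := heq ▸ lzF2_ge d y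
    rcases hs with hs | hs
    · exact absurd g1 (not_le.mpr hs)
    · exact absurd g2 (not_le.mpr hs)
end
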